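/- arXiv:2301.12960 — 2 statements merged into one kernel-verified Lean document; each statement's English description precedes it below -/
import Mathlib

section
/- Let H̃ be a Hermitian n×n matrix with n distinct eigenvalues λ_1,...,λ_n and unitary diagonalization H̃ = X diag(λ) X†. Then for every i, j, k: X_{ik} X*_{jk} = (Σ_{p=0}^{n-1} (-1)^p (H̃^p)_{ij} c_{n-1-p,k}) / Z_k, where Z_k = Π_{p≠k} (λ_p − λ_k) and c_{p,k} is the elementary symmetric polynomial of degree p in the eigenvalues {λ_q : q ≠ k} (with c_{0,k} = 1). -/
open Matrix Finset

lemma prod_sub_expand' {n : ℕ} (s : Finset (Fin n)) (a : Fin n → ℂ) (x : ℂ) :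
    ∏ q ∈ s, (a q - x) =
      ∑ p ∈ Finset.range (s.card + 1), (-1 : ℂ) ^ p * x ^ p *
        ∑ t ∈ Finset.powersetCard (s.card - p) s, ∏ q ∈ t, a q := by
  have h1 : ∏ q ∈ s, (a q - x)
      = ∑ t ∈ s.powerset, (∏ q ∈ t, a q) * (-x) ^ (s.card - t.card) := by
    simp_rw [sub_eq_add_neg]
    rw [Finset.prod_add]
    refine Finset.sum_congr rfl fun t ht => ?_
    rw [Finset.prod_const, Finset.card_sdiff_of_subset (Finset.mem_powerset.mp ht)]
  rw [h1, Finset.sum_powerset]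
  rw [← Finset.sum_range_reflect]
  refine Finset.sum_congr rfl fun p hp => ?_
  have hp' : p ≤ s.card := Nat.lt_succ_iff.mp (Finset.mem_range.mp hp)
  have hidx : s.card + 1 - 1 - p = s.card - p := by omega
  rw [hidx, Finset.mul_sum]
  refine Finset.sum_congr rfl fun t ht => ?_
  have htc : t.card = s.card - p := (Finset.mem_powersetCard.mp ht).2
  rw [htc]
  have : s.card - (s.card - p) = p := by omega
  rw [this, neg_pow]
  ring

/-- Kimura–Takamura–Yokomakura-type formula: for a Hermitian matrix `H̃` with
pairwise distinct eigenvalues diagonalized by a unitary `X`,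
`X_{ik} X*_{jk} = (Σ_{p=0}^{n-1} (-1)^p (H̃^p)_{ij} c_{n-1-p,k}) / Z_k`. -/
theorem stmt_7 {n : ℕ} (Htilde : Matrix (Fin n) (Fin n) ℂ) (hH : Htildeᴴ = Htilde)
    (lam : Fin n → ℝ) (hdist : Function.Injective lam)
    (X : Matrix (Fin n) (Fin n) ℂ) (hX1 : X * Xᴴ = 1) (hX2 : Xᴴ * X = 1)
    (hdiag : Htilde = X * Matrix.diagonal (fun i => (lam i : ℂ)) * Xᴴ)
    (i j k : Fin n) :
    X i k * (starRingEnd ℂ) (X j k) =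
      (∑ p ∈ Finset.range n, (-1 : ℂ) ^ p * (Htilde ^ p) i j *
        ((∑ s ∈ Finset.powersetCard (n - 1 - p) (Finset.univ.erase k),
            ∏ q ∈ s, lam q : ℝ) : ℂ)) /
      ((∏ p ∈ Finset.univ.erase k, (lam p - lam k) : ℝ) : ℂ) := by
  have hn : 0 < n := k.pos
  -- powers of Htilde
  have hpow : ∀ p : ℕ, Htilde ^ p
      = X * Matrix.diagonal (fun m => ((lam m : ℂ)) ^ p) * Xᴴ := by
    intro p
    induction p with
    | zero => simp [Matrix.diagonal_one, hX1]
    | succ p ih =>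
        rw [pow_succ, ih, hdiag]
        calc X * Matrix.diagonal (fun m => ((lam m : ℂ)) ^ p) * Xᴴ *
              (X * Matrix.diagonal (fun i => (lam i : ℂ)) * Xᴴ)
            = X * Matrix.diagonal (fun m => ((lam m : ℂ)) ^ p) * (Xᴴ * X) *
              Matrix.diagonal (fun i => (lam i : ℂ)) * Xᴴ := by
              simp only [Matrix.mul_assoc]
          _ = X * (Matrix.diagonal (fun m => ((lam m : ℂ)) ^ p) *
              Matrix.diagonal (fun i => (lam i : ℂ))) * Xᴴ := by
              rw [hX2]; simp only [Matrix.mul_one, Matrix.mul_assoc]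
          _ = X * Matrix.diagonal (fun m => ((lam m : ℂ)) ^ (p + 1)) * Xᴴ := by
              rw [Matrix.diagonal_mul_diagonal]
              simp [pow_succ]
  have hentry : ∀ p : ℕ, (Htilde ^ p) i j
      = ∑ m, X i m * (lam m : ℂ) ^ p * (starRingEnd ℂ) (X j m) := by
    intro p
    rw [hpow p, Matrix.mul_apply]
    refine Finset.sum_congr rfl fun m _ => ?_
    rw [Matrix.mul_diagonal, Matrix.conjTranspose_apply]
    rfl
  have hcard : (Finset.univ.erase k).card = n - 1 := by
    simp [Finset.card_erase_of_mem]
  -- the numerator equals X i k * conj (X j k) * Z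
  have hZne : ((∏ p ∈ Finset.univ.erase k, (lam p - lam k) : ℝ) : ℂ) ≠ 0 := by
    rw [Complex.ofReal_ne_zero]
    refine Finset.prod_ne_zero_iff.mpr fun p hp => ?_
    have : lam p ≠ lam k := fun h => (Finset.mem_erase.mp hp).1 (hdist h)
    exact sub_ne_zero.mpr this
  rw [eq_div_iff hZne]
  calc X i k * (starRingEnd ℂ) (X j k) *
        ((∏ p ∈ Finset.univ.erase k, (lam p - lam k) : ℝ) : ℂ)
      = ∑ m, X i m * (starRingEnd ℂ) (X j m) *
          ∏ q ∈ Finset.univ.erase k, ((lam q : ℂ) - (lam m : ℂ)) := by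
        rw [Finset.sum_eq_single k]
        · push_cast
          ring
        · intro m _ hm
          have : ∏ q ∈ Finset.univ.erase k, ((lam q : ℂ) - (lam m : ℂ)) = 0 :=
            Finset.prod_eq_zero (Finset.mem_erase.mpr ⟨hm, Finset.mem_univ m⟩)
              (by simp)
          rw [this, mul_zero]
        · intro h; exact absurd (Finset.mem_univ k) h
    _ = ∑ p ∈ Finset.range n, (-1 : ℂ) ^ p * (Htilde ^ p) i j *
          ((∑ s ∈ Finset.powersetCard (n - 1 - p) (Finset.univ.erase k),
            ∏ q ∈ s, lam q : ℝ) : ℂ) := by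
        have hexp : ∀ m : Fin n, ∏ q ∈ Finset.univ.erase k, ((lam q : ℂ) - (lam m : ℂ))
            = ∑ p ∈ Finset.range n, (-1 : ℂ) ^ p * (lam m : ℂ) ^ p *
              ∑ t ∈ Finset.powersetCard (n - 1 - p) (Finset.univ.erase k),
                ∏ q ∈ t, (lam q : ℂ) := by
          intro m
          have := prod_sub_expand' (Finset.univ.erase k)
            (fun q => (lam q : ℂ)) ((lam m : ℂ))
          rw [hcard] at this
          have h2 : n - 1 + 1 = n := by omega
          rw [h2] at this
          exact this
        simp_rw [hexp, Finset.mul_sum]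
        rw [Finset.sum_comm]
        refine Finset.sum_congr rfl fun p hp => ?_
        rw [hentry p]
        push_cast
        rw [mul_assoc, Finset.sum_mul_sum, Finset.mul_sum]
        refine Finset.sum_congr rfl fun m _ => ?_
        rw [Finset.mul_sum]
        exact Finset.sum_congr rfl fun t _ => by ring
end

section
/- For the two-state nonorthogonal system with Gram matrix N = [[1, N₁₂],[N₁₂*, 1]] and |N₁₂| < 1, the projected probability operators (p_α)_{{1,2}} = (1−|N₁₂|⁴)^{-1}[p_α + |N₁₂|² p_{¬α} − ((1+|N₁₂|²)/2){p_α, p_{¬α}}] satisfy (p₁)_{{1,2}} + (p₂)_{{1,2}} = I. -/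
/-- Two-state projected probability operators sum to the identity:
`(p₁)_{{1,2}} + (p₂)_{{1,2}} = I`. -/
theorem stmt_14 {V : Type*} [NormedAddCommGroup V] [InnerProductSpace ℂ V]
    (hdim : Module.finrank ℂ V = 2)
    (v1 v2 : V) (hv1 : (inner ℂ v1 v1 : ℂ) = 1) (hv2 : (inner ℂ v2 v2 : ℂ) = 1)
    (N12 : ℂ) (hN : (inner ℂ v1 v2 : ℂ) = N12) (hN1 : ‖N12‖ < 1)
    (p1 p2 : V →ₗ[ℂ] V)
    (hp1 : ∀ ψ, p1 ψ = (inner ℂ v1 ψ : ℂ) • v1)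
    (hp2 : ∀ ψ, p2 ψ = (inner ℂ v2 ψ : ℂ) • v2) :
    (((1 - ‖N12‖ ^ 4 : ℝ) : ℂ))⁻¹ •
        (p1 + ((‖N12‖ ^ 2 : ℝ) : ℂ) • p2 -
          (((1 + ‖N12‖ ^ 2) / 2 : ℝ) : ℂ) • (p1 * p2 + p2 * p1)) +
      (((1 - ‖N12‖ ^ 4 : ℝ) : ℂ))⁻¹ •
        (p2 + ((‖N12‖ ^ 2 : ℝ) : ℂ) • p1 -
          (((1 + ‖N12‖ ^ 2) / 2 : ℝ) : ℂ) • (p2 * p1 + p1 * p2)) =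
      LinearMap.id := by
  have h21 : (inner ℂ v2 v1 : ℂ) = (starRingEnd ℂ) N12 := by
    rw [← hN, ← inner_conj_symm]
  have hmul : N12 * (starRingEnd ℂ) N12 = ((‖N12‖ ^ 2 : ℝ) : ℂ) := by
    rw [Complex.mul_conj]
    push_cast [Complex.normSq_eq_norm_sq]
    ring
  have habs := norm_nonneg N12
  have hpow : ‖N12‖ ^ 4 < 1 := pow_lt_one₀ habs hN1 (by norm_num)
  have hrne : (1 - ‖N12‖ ^ 4 : ℝ) ≠ 0 := by linarith
  have hne' : (1 : ℂ) - (‖N12‖ : ℂ) ^ 4 ≠ 0 := by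
    have := Complex.ofReal_ne_zero.mpr hrne
    push_cast at this
    exact this
  have hmul' : (starRingEnd ℂ) N12 * N12 = ((‖N12‖ ^ 2 : ℝ) : ℂ) := by
    rw [mul_comm]; exact hmul
  have hli : LinearIndependent ℂ ![v1, v2] := by
    rw [LinearIndependent.pair_iff]
    intro s t hst
    have e1 : s + t * N12 = 0 := by
      have := congrArg (fun w => (inner ℂ v1 w : ℂ)) hst
      simpa [inner_add_right, inner_smul_right, hv1, hN, mul_comm, -inner_self_eq_norm_sq_to_K] using this
    have e2 : s * (starRingEnd ℂ) N12 + t = 0 := by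
      have := congrArg (fun w => (inner ℂ v2 w : ℂ)) hst
      simpa [inner_add_right, inner_smul_right, hv2, h21, mul_comm, -inner_self_eq_norm_sq_to_K] using this
    have ht : t * (1 - ((‖N12‖ ^ 2 : ℝ) : ℂ)) = 0 := by
      linear_combination e2 - (starRingEnd ℂ) N12 * e1 + t * hmul
    have hne2 : (1 - ((‖N12‖ ^ 2 : ℝ) : ℂ)) ≠ 0 := by
      rw [sub_ne_zero]
      intro h
      have : (‖N12‖ ^ 2 : ℝ) = 1 := by exact_mod_cast h.symm
      nlinarith
    have ht0 : t = 0 := by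
      rcases mul_eq_zero.mp ht with h | h
      · exact h
      · exact absurd h hne2
    constructor
    · have := e1; rw [ht0] at this; simpa using this
    · exact ht0
  have hcard : Fintype.card (Fin 2) = Module.finrank ℂ V := by simp [hdim]
  let b := basisOfLinearIndependentOfCardEqFinrank hli hcard
  apply b.ext
  intro i
  have hb : ∀ j, b j = ![v1, v2] j := fun j => by
    simp [b, coe_basisOfLinearIndependentOfCardEqFinrank]
  fin_cases i <;>
    simp only [hb, Fin.mk_zero, Fin.mk_one, Fin.isValue, Matrix.cons_val_zero, Matrix.cons_val_one, Matrix.head_cons,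
      LinearMap.add_apply, LinearMap.sub_apply, LinearMap.smul_apply,
      Module.End.mul_apply, LinearMap.id_apply, hp1, hp2, inner_smul_right,
      inner_add_right, hv1, hv2, hN, h21, one_mul, mul_one, hmul, hmul'] <;>
    match_scalars <;>
    (push_cast; field_simp; ring)
end
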